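/- Let B be a positive semidefinite n×n matrix with all diagonal entries equal to 1, let f be a convex function on an open interval I, and let A be a Hermitian n×n matrix with spectrum in I. Then for every k = 1, …, n, Σ_{i=1}^k λ_i(f(A ∘ B)) ≤ Σ_{i=1}^k λ_i(f(A) ∘ B), where ∘ denotes the Schur (entrywise) product. -/

import Mathlib

open scoped ComplexOrder

/-- The eigenvalues of a (Hermitian) matrix arranged in non-increasing order, counted
with multiplicity; junk value `0` for non-Hermitian matrices. -/
noncomputable def eigDesc {n : ℕ} (A : Matrix (Fin n) (Fin n) ℂ) (i : Fin n) : ℝ :=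
  if h : A.IsHermitian then (h.eigenvalues ∘ Tuple.sort h.eigenvalues) i.rev else 0

namespace SchurJensenAux

open Finset Matrix Polynomial

variable {n : ℕ}

/-! ### Combinatorial lemmas -/

lemma card_filter_lt_fin {n k : ℕ} (hk : k ≤ n) :
    (Finset.filter (fun i : Fin n => (i : ℕ) < k) Finset.univ).card = k := by
  have : Finset.filter (fun i : Fin n => (i : ℕ) < k) Finset.univ
      = (Finset.univ : Finset (Fin k)).map (Fin.castLEEmb hk) := by
    ext x
    simp only [mem_filter, mem_univ, true_and, Finset.mem_map]
    constructor
    · intro hx; exact ⟨⟨x.1, hx⟩, by simp [Fin.castLEEmb, Fin.castLE]⟩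
    · rintro ⟨y, rfl⟩; simpa using y.2
  rw [this, Finset.card_map, Finset.card_univ, Fintype.card_fin]

lemma L0 {n k : ℕ} (hk : k ≤ n) (d c : Fin n → ℝ) (hc0 : ∀ i, 0 ≤ c i) (hc1 : ∀ i, c i ≤ 1)
    (hsum : ∑ i, c i = (k : ℝ)) :
    ∑ i, c i * d i ≤
      ∑ i ∈ Finset.filter (fun i : Fin n => (i : ℕ) < k) Finset.univ,
        (d ∘ Tuple.sort d) i.rev := by
  rcases Nat.eq_zero_or_pos k with rfl | hkpos
  · have hc : ∀ i ∈ Finset.univ, c i = 0 := by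
      intro i _
      have := (Finset.sum_eq_zero_iff_of_nonneg (fun i _ => hc0 i)).mp (by simpa using hsum)
      exact this i (mem_univ i)
    simp only [Nat.not_lt_zero, Finset.filter_false, Finset.sum_empty]
    calc ∑ i, c i * d i = 0 := Finset.sum_eq_zero fun i hi => by rw [hc i hi, zero_mul]
    _ ≤ 0 := le_rfl
  · set σ := Tuple.sort d with hσ
    have hmono : Monotone (d ∘ σ) := Tuple.monotone_sort d
    set T : Finset (Fin n) :=
      (Finset.filter (fun i : Fin n => (i : ℕ) < k) Finset.univ).image (fun i => σ i.rev) with hT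
    have hinj : Function.Injective (fun i : Fin n => σ i.rev) :=
      fun a b hab => Fin.rev_injective (σ.injective hab)
    have hRHS : ∑ i ∈ Finset.filter (fun i : Fin n => (i : ℕ) < k) Finset.univ,
        (d ∘ σ) i.rev = ∑ m ∈ T, d m := by
      rw [hT, Finset.sum_image (fun a _ b _ h => hinj h)]
      rfl
    have hTcard : T.card = k := by
      rw [hT, Finset.card_image_of_injective _ hinj, card_filter_lt_fin hk]
    have hnk : n - k < n := by omega
    set t : ℝ := d (σ ⟨n - k, hnk⟩) with ht
    have hmemT : ∀ m ∈ T, t ≤ d m := by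
      intro m hm
      rw [hT, Finset.mem_image] at hm
      obtain ⟨i, hi, rfl⟩ := hm
      simp only [mem_filter, mem_univ, true_and] at hi
      have : (⟨n - k, hnk⟩ : Fin n) ≤ i.rev := by
        rw [Fin.le_def]
        simp only [Fin.val_rev]
        omega
      exact hmono this
    have hnotT : ∀ m ∉ T, d m ≤ t := by
      intro m hm
      set j : Fin n := σ.symm m with hj
      have hmj : m = σ j := by rw [hj, Equiv.apply_symm_apply]
      have hjlt : (j : ℕ) < n - k := by
        by_contra hge
        push_neg at hge
        apply hm
        rw [hT, Finset.mem_image]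
        refine ⟨j.rev, ?_, by rw [Fin.rev_rev, hmj]⟩
        simp only [mem_filter, mem_univ, true_and, Fin.val_rev]
        omega
      have : j ≤ (⟨n - k, hnk⟩ : Fin n) := by rw [Fin.le_def]; exact le_of_lt hjlt
      rw [hmj]
      exact hmono this
    rw [hRHS]
    set ind : Fin n → ℝ := fun i => if i ∈ T then (1:ℝ) else 0 with hind
    have hTsum : ∑ m ∈ T, d m = ∑ i, ind i * d i := by
      simp [hind, ite_mul, Finset.sum_ite_mem]
    have hindsum : ∑ i, ind i = (k : ℝ) := by
      simp [hind, Finset.sum_ite_mem, hTcard]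
    have hzero : ∑ i, (c i - ind i) = 0 := by
      rw [Finset.sum_sub_distrib, hsum, hindsum, sub_self]
    have key : ∑ i, (c i - ind i) * (d i - t) ≤ 0 := by
      apply Finset.sum_nonpos
      intro i _
      by_cases hiT : i ∈ T
      · apply mul_nonpos_of_nonpos_of_nonneg
        · simp [hind, hiT]; linarith [hc1 i]
        · linarith [hmemT i hiT]
      · apply mul_nonpos_of_nonneg_of_nonpos
        · simp [hind, hiT]; exact hc0 i
        · linarith [hnotT i hiT]
    have expand : ∑ i, (c i - ind i) * d i
        = ∑ i, (c i - ind i) * (d i - t) + (∑ i, (c i - ind i)) * t := by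
      rw [Finset.sum_mul, ← Finset.sum_add_distrib]
      congr 1; ext i; ring
    have hle : ∑ i, (c i - ind i) * d i ≤ 0 := by
      rw [expand, hzero, zero_mul, add_zero]; exact key
    have hsplit : ∑ i, (c i - ind i) * d i = ∑ i, c i * d i - ∑ i, ind i * d i := by
      rw [← Finset.sum_sub_distrib]; congr 1; ext i; ring
    rw [hTsum]
    linarith [hsplit ▸ hle]

/-! ### Sorted eigenvalues from a unitary diagonalization -/

lemma charpoly_unitary_conj (U : Matrix.unitaryGroup (Fin n) ℂ) (D : Matrix (Fin n) (Fin n) ℂ) :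
    ((U : Matrix (Fin n) (Fin n) ℂ) * D * star (U : Matrix (Fin n) (Fin n) ℂ)).charpoly
      = D.charpoly := by
  set Uc := (U : Matrix (Fin n) (Fin n) ℂ) with hUc
  have hUs : Uc * star Uc = 1 := Matrix.mem_unitaryGroup_iff.mp U.2
  have hcomm : ∀ M : Matrix (Fin n) (Fin n) ℂ[X],
      M * Matrix.scalar (Fin n) (X : ℂ[X]) = Matrix.scalar (Fin n) (X : ℂ[X]) * M :=
    fun M => (Matrix.scalar_commute (X : ℂ[X]) (Commute.all X) M).symm
  have h1 : charmatrix (Uc * D * star Uc)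
      = Uc.map C * charmatrix D * (star Uc).map C := by
    unfold charmatrix
    simp only [RingHom.mapMatrix_apply]
    rw [Matrix.mul_sub, Matrix.sub_mul]
    congr 1
    · rw [hcomm (Uc.map C), Matrix.mul_assoc, ← Matrix.map_mul, hUs]
      simp
    · rw [← Matrix.map_mul, ← Matrix.map_mul, Matrix.mul_assoc]
  have hdet1 : (Uc.map (C : ℂ →+* ℂ[X])).det * ((star Uc).map (C : ℂ →+* ℂ[X])).det = 1 := by
    rw [← Matrix.det_mul, ← Matrix.map_mul, hUs]
    simp
  rw [Matrix.charpoly, Matrix.charpoly, h1, Matrix.det_mul, Matrix.det_mul]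
  ring_nf
  rw [mul_comm, ← mul_assoc, mul_comm ((star Uc).map _).det, hdet1, one_mul]

lemma charpoly_diagonal_c (d : Fin n → ℂ) :
    (Matrix.diagonal d).charpoly = ∏ i, (X - C (d i)) := by
  have h : charmatrix (Matrix.diagonal d) = Matrix.diagonal (fun i => X - C (d i)) := by
    ext i j
    by_cases hij : i = j
    · subst hij; simp [charmatrix_apply_eq]
    · simp [charmatrix_apply_ne _ _ _ hij, Matrix.diagonal_apply_ne _ hij]
  rw [Matrix.charpoly, h, Matrix.det_diagonal]

lemma roots_of_unitary_diag (U : Matrix.unitaryGroup (Fin n) ℂ) (w : Fin n → ℝ) :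
    ((U : Matrix (Fin n) (Fin n) ℂ) * Matrix.diagonal (RCLike.ofReal ∘ w)
      * star (U : Matrix (Fin n) (Fin n) ℂ)).charpoly.roots
      = Finset.univ.val.map (fun i => ((w i : ℝ) : ℂ)) := by
  rw [charpoly_unitary_conj, charpoly_diagonal_c]
  have : ∏ i, (X - C ((RCLike.ofReal ∘ w) i))
      = ((Finset.univ.val.map (fun i => ((w i : ℝ) : ℂ))).map (fun a => X - C a)).prod := by
    rw [Multiset.map_map]
    rfl
  rw [this, Polynomial.roots_multiset_prod_X_sub_C]

/-- If a Hermitian matrix is unitarily conjugate to a real diagonal, then its sorted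
eigenvalue tuple coincides with the sorted diagonal. -/
lemma sorted_eigenvalues_eq {H : Matrix (Fin n) (Fin n) ℂ} (hH : H.IsHermitian)
    (U : Matrix.unitaryGroup (Fin n) ℂ) (w : Fin n → ℝ)
    (hdecomp : H = (U : Matrix (Fin n) (Fin n) ℂ) * Matrix.diagonal (RCLike.ofReal ∘ w)
      * star (U : Matrix (Fin n) (Fin n) ℂ)) :
    hH.eigenvalues ∘ Tuple.sort hH.eigenvalues = w ∘ Tuple.sort w := by
  have h1 : Finset.univ.val.map (fun i => ((w i : ℝ) : ℂ))
      = Finset.univ.val.map (fun i => ((hH.eigenvalues i : ℝ) : ℂ)) := by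
    rw [← roots_of_unitary_diag U w, ← hdecomp,
      ← roots_of_unitary_diag hH.eigenvectorUnitary hH.eigenvalues]
    exact congrArg (fun M => M.charpoly.roots) hH.spectral_theorem
  have h2 : Finset.univ.val.map w = Finset.univ.val.map hH.eigenvalues := by
    have := congrArg (Multiset.map Complex.re) h1
    simpa [Multiset.map_map, Function.comp_def] using this
  have hofFn : ∀ g : Fin n → ℝ, ((List.ofFn g : List ℝ) : Multiset ℝ)
      = Finset.univ.val.map g := by
    intro g
    rw [List.ofFn_eq_map]
    rfl
  have hperm : ∀ (g : Fin n → ℝ) (σ : Equiv.Perm (Fin n)),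
      Finset.univ.val.map (g ∘ σ) = Finset.univ.val.map g := by
    intro g σ
    have h3 : Finset.univ.val.map (⇑σ) = Finset.univ.val := by
      rw [show (⇑σ) = ⇑σ.toEmbedding from rfl, ← Finset.map_val, Finset.map_univ_equiv]
    calc Finset.univ.val.map (g ∘ ⇑σ) = (Finset.univ.val.map ⇑σ).map g :=
          (Multiset.map_map g (⇑σ) _).symm
    _ = Finset.univ.val.map g := by rw [h3]
  have hlistperm : (List.ofFn (hH.eigenvalues ∘ Tuple.sort hH.eigenvalues)).Perm
      (List.ofFn (w ∘ Tuple.sort w)) := by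
    rw [← Multiset.coe_eq_coe, hofFn, hofFn, hperm, hperm, h2]
  have hs1 : (List.ofFn (hH.eigenvalues ∘ Tuple.sort hH.eigenvalues)).Pairwise (· ≤ ·) :=
    (Tuple.monotone_sort hH.eigenvalues).sortedLE_ofFn.pairwise
  have hs2 : (List.ofFn (w ∘ Tuple.sort w)).Pairwise (· ≤ ·) :=
    (Tuple.monotone_sort w).sortedLE_ofFn.pairwise
  exact List.ofFn_injective (List.Perm.eq_of_pairwise' hs1 hs2 hlistperm)

lemma isHermitian_unitary_diag (U : Matrix.unitaryGroup (Fin n) ℂ) (w : Fin n → ℝ) :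
    ((U : Matrix (Fin n) (Fin n) ℂ) * Matrix.diagonal (RCLike.ofReal ∘ w)
      * star (U : Matrix (Fin n) (Fin n) ℂ)).IsHermitian := by
  rw [Matrix.star_eq_conjTranspose]
  apply Matrix.isHermitian_mul_mul_conjTranspose
  have hst : star (RCLike.ofReal ∘ w : Fin n → ℂ) = RCLike.ofReal ∘ w := by
    funext i
    exact Complex.conj_ofReal _
  rw [Matrix.IsHermitian, Matrix.diagonal_conjTranspose, hst]

lemma eigDesc_of_unitary_diag {H : Matrix (Fin n) (Fin n) ℂ} (hH : H.IsHermitian)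
    (U : Matrix.unitaryGroup (Fin n) ℂ) (w : Fin n → ℝ)
    (hdecomp : H = (U : Matrix (Fin n) (Fin n) ℂ) * Matrix.diagonal (RCLike.ofReal ∘ w)
      * star (U : Matrix (Fin n) (Fin n) ℂ)) (i : Fin n) :
    eigDesc H i = (w ∘ Tuple.sort w) i.rev := by
  rw [eigDesc, dif_pos hH, sorted_eigenvalues_eq hH U w hdecomp]

/-! ### Quadratic form computations -/

lemma triple_apply (U : Matrix (Fin n) (Fin n) ℂ) (δ : Fin n → ℂ) (i j : Fin n) :
    (U * Matrix.diagonal δ * star U) i j = ∑ m, δ m * (U i m * star (U j m)) := by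
  rw [Matrix.mul_apply]
  refine Finset.sum_congr rfl fun m _ => ?_
  rw [Matrix.mul_diagonal, Matrix.star_apply]
  ring

lemma hquad (U : Matrix (Fin n) (Fin n) ℂ) (δ : Fin n → ℂ) (B : Matrix (Fin n) (Fin n) ℂ)
    (u : Fin n → ℂ) :
    star u ⬝ᵥ (((U * Matrix.diagonal δ * star U).hadamard B) *ᵥ u)
      = ∑ m, δ m * (star (fun j => star (U j m) * u j) ⬝ᵥ
          (B *ᵥ (fun j => star (U j m) * u j))) := by
  have lhs : star u ⬝ᵥ (((U * Matrix.diagonal δ * star U).hadamard B) *ᵥ u)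
      = ∑ i, ∑ j, ∑ m, δ m * ((U i m * star (u i)) * (star (U j m) * u j) * B i j) := by
    simp only [dotProduct, mulVec, hadamard_apply, triple_apply, Pi.star_apply]
    refine Finset.sum_congr rfl fun i _ => ?_
    rw [Finset.mul_sum]
    refine Finset.sum_congr rfl fun j _ => ?_
    rw [Finset.sum_mul, Finset.sum_mul, Finset.mul_sum]
    refine Finset.sum_congr rfl fun m _ => ?_
    ring
  have rhs : ∑ m, δ m * (star (fun j => star (U j m) * u j) ⬝ᵥ
          (B *ᵥ (fun j => star (U j m) * u j)))
      = ∑ m, ∑ i, ∑ j, δ m * ((U i m * star (u i)) * (star (U j m) * u j) * B i j) := by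
    refine Finset.sum_congr rfl fun m _ => ?_
    simp only [dotProduct, mulVec, Pi.star_apply, star_mul', star_star]
    rw [Finset.mul_sum]
    refine Finset.sum_congr rfl fun i _ => ?_
    rw [Finset.mul_sum, Finset.mul_sum]
    refine Finset.sum_congr rfl fun j _ => ?_
    ring
  rw [lhs, rhs]
  rw [show (∑ i : Fin n, ∑ j : Fin n, ∑ m : Fin n,
      δ m * ((U i m * star (u i)) * (star (U j m) * u j) * B i j))
    = ∑ i : Fin n, ∑ m : Fin n, ∑ j : Fin n,
      δ m * ((U i m * star (u i)) * (star (U j m) * u j) * B i j)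
    from Finset.sum_congr rfl fun i _ => Finset.sum_comm]
  exact Finset.sum_comm

/-- Quadratic form of a unitary diagonalization evaluated componentwise. -/
lemma quad (U : Matrix (Fin n) (Fin n) ℂ) (δ : Fin n → ℂ) (u : Fin n → ℂ) :
    star u ⬝ᵥ ((U * Matrix.diagonal δ * star U) *ᵥ u)
      = ∑ m, δ m * ((Complex.normSq ((star U *ᵥ u) m) : ℝ) : ℂ) := by
  have hJ : (U * Matrix.diagonal δ * star U).hadamard (Matrix.of fun _ _ : Fin n => (1:ℂ))
      = U * Matrix.diagonal δ * star U := by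
    ext i j
    simp [Matrix.hadamard_apply]
  have := hquad U δ (Matrix.of fun _ _ : Fin n => (1:ℂ)) u
  rw [hJ] at this
  rw [this]
  refine Finset.sum_congr rfl fun m _ => ?_
  congr 1
  have hz : (star U *ᵥ u) m = ∑ j, star (U j m) * u j := by
    simp [Matrix.mulVec, dotProduct, Matrix.star_apply]
  rw [hz]
  set y : Fin n → ℂ := fun j => star (U j m) * u j with hy
  calc star y ⬝ᵥ ((Matrix.of fun _ _ : Fin n => (1:ℂ)) *ᵥ y)
      = (∑ i, star (y i)) * (∑ j, y j) := by
        simp only [dotProduct, Matrix.mulVec, Pi.star_apply, Matrix.of_apply, one_mul]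
        rw [Finset.sum_mul]
  _ = star (∑ j, y j) * (∑ j, y j) := by rw [star_sum]
  _ = ((Complex.normSq (∑ j, y j) : ℝ) : ℂ) := by
        rw [Complex.star_def, mul_comm, Complex.mul_conj]


/-! ### Ky Fan maximum principle -/

lemma kyFan {H : Matrix (Fin n) (Fin n) ℂ} (hH : H.IsHermitian)
    (V : Matrix.unitaryGroup (Fin n) ℂ) {k : ℕ} (hk : k ≤ n) (S : Finset (Fin n))
    (hS : S.card = k) :
    ∑ m ∈ S, (star (fun j => (V : Matrix (Fin n) (Fin n) ℂ) j m) ⬝ᵥ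
        (H *ᵥ (fun j => (V : Matrix (Fin n) (Fin n) ℂ) j m))).re
      ≤ ∑ i ∈ Finset.filter (fun i : Fin n => (i : ℕ) < k) Finset.univ, eigDesc H i := by
  set d := hH.eigenvalues with hd
  set U := hH.eigenvectorUnitary with hU
  set P := star (U : Matrix (Fin n) (Fin n) ℂ) * (V : Matrix (Fin n) (Fin n) ℂ) with hP
  have hPmem : P ∈ Matrix.unitaryGroup (Fin n) ℂ := mul_mem (Unitary.star_mem U.2) V.2
  have hentry : ∀ l m : Fin n, P l m * star (P l m) = ((Complex.normSq (P l m) : ℝ) : ℂ) :=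
    fun l m => by rw [Complex.star_def, Complex.mul_conj]
  have hrow : ∀ l, ∑ m, Complex.normSq (P l m) = 1 := by
    intro l
    have h1 : (P * star P) l l = 1 := by
      rw [Matrix.mem_unitaryGroup_iff.mp hPmem]; simp
    have h2 : (P * star P) l l = ∑ m, ((Complex.normSq (P l m) : ℝ) : ℂ) := by
      rw [Matrix.mul_apply]
      exact Finset.sum_congr rfl fun m _ => by rw [Matrix.star_apply, hentry]
    rw [h2] at h1
    exact_mod_cast h1
  have hcol : ∀ m, ∑ l, Complex.normSq (P l m) = 1 := by
    intro m
    have h1 : (star P * P) m m = 1 := by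
      rw [Matrix.mem_unitaryGroup_iff'.mp hPmem]; simp
    have h2 : (star P * P) m m = ∑ l, ((Complex.normSq (P l m) : ℝ) : ℂ) := by
      rw [Matrix.mul_apply]
      refine Finset.sum_congr rfl fun l _ => ?_
      rw [Matrix.star_apply, mul_comm, hentry]
    rw [h2] at h1
    exact_mod_cast h1
  set c : Fin n → ℝ := fun l => ∑ m ∈ S, Complex.normSq (P l m) with hc
  have hquadm : ∀ m : Fin n, (star (fun j => (V : Matrix (Fin n) (Fin n) ℂ) j m) ⬝ᵥ
      (H *ᵥ (fun j => (V : Matrix (Fin n) (Fin n) ℂ) j m))).re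
        = ∑ l, d l * Complex.normSq (P l m) := by
    intro m
    have hsp : H = (U : Matrix (Fin n) (Fin n) ℂ) * Matrix.diagonal (RCLike.ofReal ∘ d)
        * star (U : Matrix (Fin n) (Fin n) ℂ) := hH.spectral_theorem
    have hz : ∀ l, (star (U : Matrix (Fin n) (Fin n) ℂ) *ᵥ
        (fun j => (V : Matrix (Fin n) (Fin n) ℂ) j m)) l = P l m := by
      intro l
      rw [hP, Matrix.mul_apply]
      simp [Matrix.mulVec, dotProduct]
    conv_lhs => rw [hsp]
    rw [quad]
    rw [Complex.re_sum]
    refine Finset.sum_congr rfl fun l _ => ?_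
    rw [hz l]
    show (((d l : ℝ) : ℂ) * _).re = _
    rw [← Complex.ofReal_mul]
    exact Complex.ofReal_re _
  have hswap : ∑ m ∈ S, (star (fun j => (V : Matrix (Fin n) (Fin n) ℂ) j m) ⬝ᵥ
      (H *ᵥ (fun j => (V : Matrix (Fin n) (Fin n) ℂ) j m))).re = ∑ l, c l * d l := by
    rw [Finset.sum_congr rfl fun m _ => hquadm m, Finset.sum_comm]
    refine Finset.sum_congr rfl fun l _ => ?_
    rw [hc, Finset.sum_mul]
    exact Finset.sum_congr rfl fun m _ => by ring
  have hc0 : ∀ l, 0 ≤ c l := fun l =>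
    Finset.sum_nonneg fun m _ => Complex.normSq_nonneg _
  have hc1 : ∀ l, c l ≤ 1 := by
    intro l
    rw [hc, ← hrow l]
    exact Finset.sum_le_sum_of_subset_of_nonneg (Finset.subset_univ S)
      (fun m _ _ => Complex.normSq_nonneg _)
  have hcsum : ∑ l, c l = (k : ℝ) := by
    rw [hc, Finset.sum_comm]
    rw [Finset.sum_congr rfl fun m _ => hcol m]
    simp [hS]
  have hdesc : ∀ i : Fin n, eigDesc H i = (d ∘ Tuple.sort d) i.rev := by
    intro i
    exact eigDesc_of_unitary_diag hH U d hH.spectral_theorem i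
  rw [hswap, Finset.sum_congr rfl fun i _ => hdesc i]
  exact L0 hk d c hc0 hc1 hcsum

/-! ### Jensen's inequality for the quadratic forms -/

lemma jensen {A B : Matrix (Fin n) (Fin n) ℂ} (hA : A.IsHermitian) (hB : B.PosSemidef)
    (hBdiag : ∀ i, B i i = 1) {I : Set ℝ} (hAspec : spectrum ℝ A ⊆ I) {f : ℝ → ℝ}
    (hf : ConvexOn ℝ I f) (u : Fin n → ℂ) (hu : star u ⬝ᵥ u = 1) :
    f ((star u ⬝ᵥ ((A.hadamard B) *ᵥ u)).re)
      ≤ (star u ⬝ᵥ (((cfc f A).hadamard B) *ᵥ u)).re := by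
  set U := (hA.eigenvectorUnitary : Matrix (Fin n) (Fin n) ℂ) with hUdef
  set lam := hA.eigenvalues with hlam
  set y : Fin n → (Fin n → ℂ) := fun m => fun j => star (U j m) * u j with hy
  set r : Fin n → ℝ := fun m => (star (y m) ⬝ᵥ (B *ᵥ y m)).re with hr
  have key : ∀ g : Fin n → ℝ,
      (star u ⬝ᵥ (((U * Matrix.diagonal (RCLike.ofReal ∘ g) * star U).hadamard B) *ᵥ u)).re
        = ∑ m, g m * r m := by
    intro g
    rw [hquad U (RCLike.ofReal ∘ g) B u, Complex.re_sum]
    refine Finset.sum_congr rfl fun m _ => ?_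
    show (((g m : ℝ) : ℂ) * _).re = _
    rw [Complex.re_ofReal_mul]
  have hr0 : ∀ m, 0 ≤ r m := by
    intro m
    have h := hB.dotProduct_mulVec_nonneg (y m)
    have := (Complex.le_def.mp h).1
    simpa using this
  have hrsum : ∑ m, r m = 1 := by
    have h1 : U * Matrix.diagonal (RCLike.ofReal ∘ (fun _ : Fin n => (1:ℝ))) * star U
        = (1 : Matrix (Fin n) (Fin n) ℂ) := by
      have hdiag : Matrix.diagonal (RCLike.ofReal ∘ (fun _ : Fin n => (1:ℝ)))
          = (1 : Matrix (Fin n) (Fin n) ℂ) := by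
        rw [← Matrix.diagonal_one]
        congr 1
      rw [hdiag, mul_one]
      exact Matrix.mem_unitaryGroup_iff.mp hA.eigenvectorUnitary.2
    have h2 := key (fun _ => 1)
    rw [h1] at h2
    have h3 : (1 : Matrix (Fin n) (Fin n) ℂ).hadamard B = 1 := by
      rw [Matrix.one_hadamard,
        show B.diag = fun _ : Fin n => (1:ℂ) from funext hBdiag]
      exact Matrix.diagonal_one
    rw [h3, Matrix.one_mulVec, hu] at h2
    simpa using h2.symm
  have hmu := key lam
  rw [show U * Matrix.diagonal (RCLike.ofReal ∘ lam) * star U = A from hA.spectral_theorem.symm] at hmu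
  have hfmu := key (fun m => f (lam m))
  have hcfc : cfc f A = U * Matrix.diagonal (RCLike.ofReal ∘ (fun m => f (lam m))) * star U := by
    rw [hA.cfc_eq f]
    rfl
  rw [← hcfc] at hfmu
  have hmem : ∀ m ∈ Finset.univ, lam m ∈ I :=
    fun m _ => hAspec (hA.eigenvalues_mem_spectrum_real m)
  have hj := hf.map_sum_le (fun m (_ : m ∈ Finset.univ) => hr0 m) hrsum hmem
  simp only [smul_eq_mul] at hj
  rw [hmu]
  calc f (∑ m, lam m * r m) = f (∑ m, r m * lam m) := by
        congr 1
        exact Finset.sum_congr rfl fun m _ => mul_comm _ _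
  _ ≤ ∑ m, r m * f (lam m) := hj
  _ = ∑ m, f (lam m) * r m := Finset.sum_congr rfl fun m _ => mul_comm _ _
  _ = (star u ⬝ᵥ (((cfc f A).hadamard B) *ᵥ u)).re := hfmu.symm

lemma isHermitian_hadamard {A B : Matrix (Fin n) (Fin n) ℂ} (hA : A.IsHermitian)
    (hB : B.IsHermitian) : (A.hadamard B).IsHermitian := by
  ext i j
  rw [Matrix.conjTranspose_apply, Matrix.hadamard_apply, Matrix.hadamard_apply, star_mul']
  rw [hA.apply, hB.apply]

end SchurJensenAux


theorem eigDesc_sum_cfc_hadamard_le {n : ℕ} (A B : Matrix (Fin n) (Fin n) ℂ)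
    (hA : A.IsHermitian) (hB : B.PosSemidef) (hBdiag : ∀ i, B i i = 1)
    (I : Set ℝ) (hI_open : IsOpen I) (hI_conn : I.OrdConnected)
    (hAspec : spectrum ℝ A ⊆ I)
    (f : ℝ → ℝ) (hf : ConvexOn ℝ I f) :
    ∀ k : ℕ, k ≤ n →
      ∑ i ∈ Finset.filter (fun i : Fin n => (i : ℕ) < k) Finset.univ,
          eigDesc (cfc f (Matrix.hadamard A B)) i ≤
        ∑ i ∈ Finset.filter (fun i : Fin n => (i : ℕ) < k) Finset.univ,
          eigDesc (Matrix.hadamard (cfc f A) B) i := by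
  intro k hk
  classical
  have hBH : B.IsHermitian := hB.1
  have hM : (Matrix.hadamard A B).IsHermitian := SchurJensenAux.isHermitian_hadamard hA hBH
  set ν := hM.eigenvalues with hν
  set V := hM.eigenvectorUnitary with hV
  set w : Fin n → ℝ := fun m => f (ν m) with hw
  have hcfcM : cfc f (Matrix.hadamard A B)
      = (V : Matrix (Fin n) (Fin n) ℂ) * Matrix.diagonal (RCLike.ofReal ∘ w)
        * star (V : Matrix (Fin n) (Fin n) ℂ) := by
    rw [hM.cfc_eq f]
    rfl
  have hLHSherm : (cfc f (Matrix.hadamard A B)).IsHermitian := by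
    rw [hcfcM]
    exact SchurJensenAux.isHermitian_unitary_diag V w
  have hLHSdesc : ∀ i : Fin n, eigDesc (cfc f (Matrix.hadamard A B)) i
      = (w ∘ Tuple.sort w) i.rev :=
    fun i => SchurJensenAux.eigDesc_of_unitary_diag hLHSherm V w hcfcM i
  set S : Finset (Fin n) :=
    (Finset.filter (fun i : Fin n => (i : ℕ) < k) Finset.univ).image
      (fun i => Tuple.sort w i.rev) with hS
  have hinj : Function.Injective (fun i : Fin n => Tuple.sort w i.rev) :=
    fun a b hab => Fin.rev_injective ((Tuple.sort w).injective hab)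
  have hScard : S.card = k := by
    rw [hS, Finset.card_image_of_injective _ hinj, SchurJensenAux.card_filter_lt_fin hk]
  have hLHS : ∑ i ∈ Finset.filter (fun i : Fin n => (i : ℕ) < k) Finset.univ,
      eigDesc (cfc f (Matrix.hadamard A B)) i = ∑ m ∈ S, w m := by
    rw [Finset.sum_congr rfl fun i _ => hLHSdesc i, hS,
      Finset.sum_image (fun a _ b _ h => hinj h)]
    rfl
  have hfAherm : (cfc f A).IsHermitian := by
    rw [hA.cfc_eq f]
    exact SchurJensenAux.isHermitian_unitary_diag hA.eigenvectorUnitary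
      (fun m => f (hA.eigenvalues m))
  have hH : (Matrix.hadamard (cfc f A) B).IsHermitian :=
    SchurJensenAux.isHermitian_hadamard hfAherm hBH
  -- each column of V is a unit vector
  set vcol : Fin n → (Fin n → ℂ) := fun m j => (V : Matrix (Fin n) (Fin n) ℂ) j m with hvcol
  have hunit : ∀ m : Fin n, dotProduct (star (vcol m)) (vcol m) = 1 := by
    intro m
    have h1 : (star (V : Matrix (Fin n) (Fin n) ℂ) * (V : Matrix (Fin n) (Fin n) ℂ)) m m = 1 := by
      rw [Matrix.mem_unitaryGroup_iff'.mp V.2]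
      simp
    rw [← h1, Matrix.mul_apply]
    simp [dotProduct, Matrix.star_apply, hvcol]
  -- each eigenvalue is the quadratic form at its eigenvector column
  have hνm : ∀ m : Fin n, ν m = (dotProduct (star (vcol m))
      (Matrix.mulVec (Matrix.hadamard A B) (vcol m))).re := by
    intro m
    have := hM.eigenvalues_eq m
    exact this
  have hstep : ∀ m ∈ S, w m ≤ (dotProduct (star (vcol m))
      (Matrix.mulVec (Matrix.hadamard (cfc f A) B) (vcol m))).re := by
    intro m _
    have := SchurJensenAux.jensen hA hB hBdiag hAspec hf (vcol m) (hunit m)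
    show f (ν m) ≤ _
    rw [hνm m]
    exact this
  calc ∑ i ∈ Finset.filter (fun i : Fin n => (i : ℕ) < k) Finset.univ,
      eigDesc (cfc f (Matrix.hadamard A B)) i = ∑ m ∈ S, w m := hLHS
  _ ≤ ∑ m ∈ S, (dotProduct (star (vcol m))
      (Matrix.mulVec (Matrix.hadamard (cfc f A) B) (vcol m))).re :=
    Finset.sum_le_sum hstep
  _ ≤ ∑ i ∈ Finset.filter (fun i : Fin n => (i : ℕ) < k) Finset.univ,
      eigDesc (Matrix.hadamard (cfc f A) B) i :=
    SchurJensenAux.kyFan hH V hk S hScard
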